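/- arXiv:1608.06322 — 3 statements merged into one kernel-verified Lean document; each statement's English description precedes it below -/
import Mathlib

section
/- Let G be a finite non-abelian p-group of order p^n with derived subgroup of order p. Then |M(G)| · p ≥ |M(G/G')|. -/
open Subgroup Function
open scoped commutatorElement

section Hopf

variable {Q : Type*} [Group Q]

/-- Hopf quotient of a presentation `f : F →* Q`. -/
abbrev HopfQuot {F : Type*} [Group F] (f : F →* Q) : Type _ :=
  ↥(f.ker ⊓ commutator F) ⧸ (⁅(⊤ : Subgroup F), f.ker⁆).subgroupOf (f.ker ⊓ commutator F)

variable {F₁ F₂ F₃ : Type*} [Group F₁] [Group F₂] [Group F₃]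

lemma mem_commutator_map (φ : F₁ →* F₂) {x : F₁} (hx : x ∈ commutator F₁) :
    φ x ∈ commutator F₂ := by
  have h : Subgroup.map φ (commutator F₁) ≤ commutator F₂ := by
    rw [commutator_def, Subgroup.map_commutator, commutator_def]
    exact Subgroup.commutator_mono le_top le_top
  exact h (Subgroup.mem_map_of_mem φ hx)

lemma map_ker_le {π₁ : F₁ →* Q} {π₂ : F₂ →* Q} (φ : F₁ →* F₂) (h : π₂.comp φ = π₁) :
    Subgroup.map φ π₁.ker ≤ π₂.ker := by
  rintro y ⟨z, hz, rfl⟩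
  have : π₂ (φ z) = π₁ z := by rw [← h]; rfl
  simpa [MonoidHom.mem_ker, this] using hz

lemma map_commutator_ker_le {π₁ : F₁ →* Q} {π₂ : F₂ →* Q} (φ : F₁ →* F₂) (h : π₂.comp φ = π₁)
    {x : F₁} (hx : x ∈ ⁅(⊤ : Subgroup F₁), π₁.ker⁆) :
    φ x ∈ ⁅(⊤ : Subgroup F₂), π₂.ker⁆ := by
  have h1 := Subgroup.mem_map_of_mem φ hx
  rw [Subgroup.map_commutator] at h1
  exact Subgroup.commutator_mono le_top (map_ker_le φ h) h1

/-- The homomorphism of Hopf quotients induced by a map of presentations. -/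
def hopfAux {π₁ : F₁ →* Q} {π₂ : F₂ →* Q} (φ : F₁ →* F₂) (h : π₂.comp φ = π₁) :
    ↥(π₁.ker ⊓ commutator F₁) →* ↥(π₂.ker ⊓ commutator F₂) where
  toFun x := ⟨φ x, Subgroup.mem_inf.mpr
    ⟨map_ker_le φ h (Subgroup.mem_map_of_mem φ (Subgroup.mem_inf.mp x.2).1),
     mem_commutator_map φ (Subgroup.mem_inf.mp x.2).2⟩⟩
  map_one' := by ext; simp
  map_mul' x y := by ext; simp

def hopfMap {π₁ : F₁ →* Q} {π₂ : F₂ →* Q} (φ : F₁ →* F₂) (h : π₂.comp φ = π₁) :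
    HopfQuot π₁ →* HopfQuot π₂ :=
  QuotientGroup.map _ _ (hopfAux φ h) (by
    intro x hx
    rw [Subgroup.mem_subgroupOf] at hx
    rw [Subgroup.mem_comap, Subgroup.mem_subgroupOf]
    exact map_commutator_ker_le φ h hx)

lemma hopfMap_mk {π₁ : F₁ →* Q} {π₂ : F₂ →* Q} (φ : F₁ →* F₂) (h : π₂.comp φ = π₁)
    (x : ↥(π₁.ker ⊓ commutator F₁)) :
    hopfMap φ h (QuotientGroup.mk x) = QuotientGroup.mk (hopfAux φ h x) := rfl

lemma mk_mem_center (N : Subgroup F₂) [N.Normal] {r : F₂} (hr : r ∈ N) :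
    ((r : F₂) : F₂ ⧸ ⁅(⊤ : Subgroup F₂), N⁆) ∈ Subgroup.center (F₂ ⧸ ⁅(⊤ : Subgroup F₂), N⁆) := by
  rw [Subgroup.mem_center_iff]
  intro z
  induction z using QuotientGroup.induction_on with
  | _ f =>
    rw [← QuotientGroup.mk_mul, ← QuotientGroup.mk_mul, QuotientGroup.eq]
    have : (f * r)⁻¹ * (r * f) = ⁅r⁻¹, f⁻¹⁆ := by group
    rw [this, ← Subgroup.commutator_comm]
    exact commutator_mem_commutator (inv_mem hr) (Subgroup.mem_top _)

lemma hopfMap_congr {π₁ : F₁ →* Q} {π₂ : F₂ →* Q} (φ ψ : F₁ →* F₂)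
    (hφ : π₂.comp φ = π₁) (hψ : π₂.comp ψ = π₁) : hopfMap φ hφ = hopfMap ψ hψ := by
  set D := ⁅(⊤ : Subgroup F₂), π₂.ker⁆ with hD
  let m : F₂ →* F₂ ⧸ D := QuotientGroup.mk' D
  have hker : ∀ x : F₁, φ x * (ψ x)⁻¹ ∈ π₂.ker := by
    intro x
    have h1 : π₂ (φ x) = π₁ x := by rw [← hφ]; rfl
    have h2 : π₂ (ψ x) = π₁ x := by rw [← hψ]; rfl
    simp [MonoidHom.mem_ker, h1, h2]
  have hcent : ∀ x : F₁, m (φ x) * (m (ψ x))⁻¹ ∈ Subgroup.center (F₂ ⧸ D) := by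
    intro x
    have : m (φ x) * (m (ψ x))⁻¹ = ((φ x * (ψ x)⁻¹ : F₂) : F₂ ⧸ D) := by
      simp [m]
    rw [this]
    exact mk_mem_center _ (hker x)
  let c : F₁ →* F₂ ⧸ D := MonoidHom.mk' (fun x => m (φ x) * (m (ψ x))⁻¹) (by
    intro a b
    have hcb := Subgroup.mem_center_iff.mp (hcent b)
    show m (φ (a * b)) * (m (ψ (a * b)))⁻¹ =
      (m (φ a) * (m (ψ a))⁻¹) * (m (φ b) * (m (ψ b))⁻¹)
    rw [map_mul, map_mul, map_mul, map_mul]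
    set A := m (φ a); set B := m (φ b); set A' := m (ψ a); set B' := m (ψ b)
    calc A * B * (A' * B')⁻¹ = A * (B * B'⁻¹) * A'⁻¹ := by group
      _ = (B * B'⁻¹) * A * A'⁻¹ := by rw [hcb A]
      _ = (B * B'⁻¹) * (A * A'⁻¹) := by rw [mul_assoc]
      _ = A * A'⁻¹ * (B * B'⁻¹) := (hcb (A * A'⁻¹)).symm)
  have hcomm : ∀ x ∈ commutator F₁, c x = 1 := by
    have : commutator F₁ ≤ c.ker := by
      rw [commutator_def, Subgroup.commutator_le]
      intro g₁ _ g₂ _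
      rw [MonoidHom.mem_ker, map_commutatorElement]
      rw [commutatorElement_eq_one_iff_mul_comm]
      have h2 : c g₂ ∈ Subgroup.center (F₂ ⧸ D) := hcent g₂
      exact Subgroup.mem_center_iff.mp h2 (c g₁)
    intro x hx
    exact this hx
  apply MonoidHom.ext
  intro q
  induction q using QuotientGroup.induction_on with
  | _ x =>
    rw [hopfMap_mk, hopfMap_mk]
    rw [QuotientGroup.eq]
    rw [Subgroup.mem_subgroupOf]
    show ((hopfAux φ hφ x : F₂))⁻¹ * (hopfAux ψ hψ x : F₂) ∈ D
    have hx : c ↑x = 1 := hcomm _ (Subgroup.mem_inf.mp x.2).2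
    have hmm : m ((φ ↑x)⁻¹ * ψ ↑x) = 1 := by
      have heq : m (φ ↑x) = m (ψ ↑x) := by
        have h3 : m (φ ↑x) * (m (ψ ↑x))⁻¹ = 1 := hx
        rwa [mul_inv_eq_one] at h3
      rw [map_mul, map_inv, heq]
      simp
    show (φ (↑x : F₁))⁻¹ * ψ ↑x ∈ D
    exact (QuotientGroup.eq_one_iff _).mp hmm

end Hopf
section Hopf2

open Subgroup Function

variable {Q : Type*} [Group Q]
variable {F₁ F₂ F₃ : Type*} [Group F₁] [Group F₂] [Group F₃]

lemma hopfMap_comp {π₁ : F₁ →* Q} {π₂ : F₂ →* Q} {π₃ : F₃ →* Q}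
    (φ : F₁ →* F₂) (ψ : F₂ →* F₃) (h1 : π₂.comp φ = π₁) (h2 : π₃.comp ψ = π₂)
    (h3 : π₃.comp (ψ.comp φ) = π₁) :
    hopfMap (ψ.comp φ) h3 = (hopfMap ψ h2).comp (hopfMap φ h1) := by
  apply MonoidHom.ext
  intro q
  induction q using QuotientGroup.induction_on with
  | _ x =>
    show QuotientGroup.mk (hopfAux (ψ.comp φ) h3 x)
      = QuotientGroup.mk (hopfAux ψ h2 (hopfAux φ h1 x))
    congr 1

lemma hopfMap_id {π₁ : F₁ →* Q} (h : π₁.comp (MonoidHom.id F₁) = π₁) :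
    hopfMap (MonoidHom.id F₁) h = MonoidHom.id (HopfQuot π₁) := by
  apply MonoidHom.ext
  intro q
  induction q using QuotientGroup.induction_on with
  | _ x =>
    show QuotientGroup.mk (hopfAux (MonoidHom.id F₁) h x) = QuotientGroup.mk x
    congr 1

lemma exists_free_lift {A B : Type*} (ρ₁ : FreeGroup A →* Q) (ρ₂ : FreeGroup B →* Q)
    (hs : Surjective ρ₂) : ∃ φ : FreeGroup A →* FreeGroup B, ρ₂.comp φ = ρ₁ := by
  refine ⟨FreeGroup.lift (fun a => surjInv hs (ρ₁ (FreeGroup.of a))), ?_⟩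
  ext a
  show ρ₂ (FreeGroup.lift _ (FreeGroup.of a)) = ρ₁ (FreeGroup.of a)
  rw [FreeGroup.lift_apply_of]
  exact surjInv_eq hs _

theorem hopfQuot_equiv {X Y : Type*} (π₁ : FreeGroup X →* Q) (π₂ : FreeGroup Y →* Q)
    (h₁ : Surjective π₁) (h₂ : Surjective π₂) : Nonempty (HopfQuot π₁ ≃* HopfQuot π₂) := by
  obtain ⟨φ, hφ⟩ := exists_free_lift π₁ π₂ h₂
  obtain ⟨ψ, hψ⟩ := exists_free_lift π₂ π₁ h₁
  have hψφ : π₁.comp (ψ.comp φ) = π₁ := by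
    rw [← MonoidHom.comp_assoc, hψ, hφ]
  have hφψ : π₂.comp (φ.comp ψ) = π₂ := by
    rw [← MonoidHom.comp_assoc, hφ, hψ]
  refine ⟨MonoidHom.toMulEquiv (hopfMap φ hφ) (hopfMap ψ hψ) ?_ ?_⟩
  · rw [← hopfMap_comp φ ψ hφ hψ hψφ,
      hopfMap_congr (ψ.comp φ) (MonoidHom.id _) hψφ (by ext a; rfl), hopfMap_id]
  · rw [← hopfMap_comp ψ φ hψ hφ hφψ,
      hopfMap_congr (φ.comp ψ) (MonoidHom.id _) hφψ (by ext a; rfl), hopfMap_id]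

end Hopf2
section Aux

open Subgroup Function MulAction Pointwise

lemma finite_closure_of_comm {H : Type*} [CommGroup H] {p : ℕ} (hp : 0 < p)
    {V : Set H} (hfin : V.Finite) (hpow : ∀ v ∈ V, v ^ p = 1) :
    Finite (Subgroup.closure V) := by
  revert hpow
  refine Set.Finite.induction_on
    (motive := fun V _ => (∀ v ∈ V, v ^ p = 1) → Finite (Subgroup.closure V)) V hfin ?_ ?_
  · intro _
    rw [Subgroup.closure_empty]
    infer_instance
  · intro a s _ _ ih hpow
    have h2 : Finite (Subgroup.closure s) :=
      ih (fun v hv => hpow v (Set.mem_insert_of_mem _ hv))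
    have h1 : Finite (Subgroup.zpowers a) := by
      have hfo : IsOfFinOrder a :=
        isOfFinOrder_iff_pow_eq_one.mpr ⟨p, hp, hpow a (Set.mem_insert _ _)⟩
      exact Set.finite_coe_iff.mpr hfo.finite_zpowers
    have key : Subgroup.closure (insert a s) = Subgroup.zpowers a ⊔ Subgroup.closure s := by
      rw [Set.insert_eq, Subgroup.closure_union, ← Subgroup.zpowers_eq_closure]
    rw [key]
    have hset : ((Subgroup.zpowers a ⊔ Subgroup.closure s : Subgroup H) : Set H)
        = (Subgroup.zpowers a : Set H) * (Subgroup.closure s : Set H) :=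
      Subgroup.mul_normal _ _
    have : ((Subgroup.zpowers a ⊔ Subgroup.closure s : Subgroup H) : Set H).Finite := by
      rw [hset]
      exact Set.Finite.mul (Set.finite_coe_iff.mp h1) (Set.finite_coe_iff.mp h2)
    exact Set.finite_coe_iff.mpr this

lemma normal_le_center_of_card_eq {p : ℕ} [Fact p.Prime] {G : Type*} [Group G] [Finite G]
    (hG : IsPGroup p G) (N : Subgroup G) [N.Normal] (hN : Nat.card N = p) :
    N ≤ Subgroup.center G := by
  have hp : p.Prime := Fact.out
  have hG' : IsPGroup p (ConjAct G) := hG.of_equiv ConjAct.toConjAct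
  have hmod := hG'.card_modEq_card_fixedPoints (α := ↥N)
  rw [hN] at hmod
  have hdvd : p ∣ Nat.card (fixedPoints (ConjAct G) ↥N) :=
    (Nat.modEq_zero_iff_dvd).mp ((((Nat.modEq_zero_iff_dvd).mpr dvd_rfl).symm.trans hmod).symm)
  have hone : (1 : ↥N) ∈ fixedPoints (ConjAct G) ↥N := by
    intro g
    ext
    show ConjAct.ofConjAct g * ((1 : ↥N) : G) * (ConjAct.ofConjAct g)⁻¹ = ((1 : ↥N) : G)
    simp
  have hpos : 0 < Nat.card (fixedPoints (ConjAct G) ↥N) := by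
    have : Finite (fixedPoints (ConjAct G) ↥N) := Subtype.finite
    exact Nat.card_pos_iff.mpr ⟨⟨⟨1, hone⟩⟩, this⟩
  have hge : p ≤ (fixedPoints (ConjAct G) ↥N).ncard := by
    rw [← Nat.card_coe_set_eq]
    exact Nat.le_of_dvd hpos hdvd
  have huniv : fixedPoints (ConjAct G) ↥N = Set.univ := by
    refine Set.eq_of_subset_of_ncard_le (Set.subset_univ _) ?_ Set.finite_univ
    rw [Set.ncard_univ, hN]
    exact hge
  intro n hn
  rw [Subgroup.mem_center_iff]
  intro g
  have hfix : (⟨n, hn⟩ : ↥N) ∈ fixedPoints (ConjAct G) ↥N := huniv ▸ Set.mem_univ _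
  have := hfix (ConjAct.toConjAct g)
  have hval : ConjAct.toConjAct g • (n : G) = n := congrArg Subtype.val this
  rw [ConjAct.smul_def, ConjAct.ofConjAct_toConjAct] at hval
  calc g * n = (g * n * g⁻¹) * g := by group
    _ = n * g := by rw [hval]

end Aux
section Main

open Subgroup Function

/-- The Schur multiplier `M(G) = H₂(G,ℤ)` of a group `G`, defined via the Hopf formula
`M(G) ≅ (R ∩ [F,F]) / [F,R]` for the free presentation `F = FreeGroup G ↠ G`. -/
abbrev schurMultiplier (G : Type*) [Group G] : Type _ :=
  ↥((FreeGroup.lift (id : G → G)).ker ⊓ commutator (FreeGroup G)) ⧸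
    Subgroup.subgroupOf ⁅(⊤ : Subgroup (FreeGroup G)), (FreeGroup.lift (id : G → G)).ker⁆
      ((FreeGroup.lift (id : G → G)).ker ⊓ commutator (FreeGroup G))

set_option maxHeartbeats 1000000 in
/-- If `G` is a finite non-abelian `p`-group of order `p^n` with `|G'| = p`, then
`|M(G)| * p ≥ |M(G/G')|`. -/
theorem card_schurMultiplier_abelianization_le (p n : ℕ) (hp : p.Prime)
    (G : Type*) [Group G] (hG : Nat.card G = p ^ n)
    (hna : ∃ a b : G, a * b ≠ b * a)
    (hG' : Nat.card (commutator G) = p) :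
    Nat.card (schurMultiplier (Abelianization G)) ≤ Nat.card (schurMultiplier G) * p := by
  haveI : Fact p.Prime := ⟨hp⟩
  haveI hfinG : Finite G := Nat.finite_of_card_ne_zero (by rw [hG]; exact pow_ne_zero _ hp.pos.ne')
  classical
  -- the standard free presentations
  set F := FreeGroup G with hF
  set π : F →* G := FreeGroup.lift id with hπdef
  have hπs : Function.Surjective π := fun g => ⟨FreeGroup.of g, FreeGroup.lift_apply_of⟩
  set Qb := Abelianization G with hQb
  set πQ : F →* Qb := (Abelianization.of).comp π with hπQdef
  have hofs : Function.Surjective (Abelianization.of : G →* Qb) := fun q =>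
    Quotient.inductionOn' q fun g => ⟨g, rfl⟩
  have hπQs : Function.Surjective πQ := fun q => by
    obtain ⟨g, hg⟩ := hofs q
    obtain ⟨f, hf⟩ := hπs g
    exact ⟨f, by show Abelianization.of (π f) = q; rw [hf, hg]⟩
  set R := π.ker with hRdef
  set S := πQ.ker with hSdef
  set C := _root_.commutator F with hCdef
  set K := ⁅(⊤ : Subgroup F), S⁆ with hKdef
  set D := ⁅(⊤ : Subgroup F), R⁆ with hDdef
  haveI hRn : R.Normal := by rw [hRdef]; infer_instance
  haveI hSn : S.Normal := by rw [hSdef]; infer_instance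
  haveI hKn : K.Normal := by rw [hKdef]; infer_instance
  haveI hDn : D.Normal := by rw [hDdef]; infer_instance
  -- basic containments
  have hker_of : (Abelianization.of : G →* Qb).ker = _root_.commutator G := by
    ext g
    exact QuotientGroup.eq_one_iff g
  have hRS : R ≤ S := by
    intro r hr
    have h1 : π r = 1 := hr
    show Abelianization.of (π r) = 1
    rw [h1, map_one]
  have hCS : C ≤ S := by
    rw [hCdef, _root_.commutator_def, Subgroup.commutator_le]
    intro a _ b _
    show πQ ⁅a, b⁆ = 1
    rw [map_commutatorElement, commutatorElement_eq_one_iff_mul_comm]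
    exact mul_comm _ _
  have hGcent : _root_.commutator G ≤ Subgroup.center G :=
    normal_le_center_of_card_eq (IsPGroup.of_card hG) _ hG'
  have hSZ : ∀ s ∈ S, π s ∈ Subgroup.center G := by
    intro s hs
    apply hGcent
    rw [← hker_of]
    exact hs
  have hKR : K ≤ R := by
    rw [hKdef, Subgroup.commutator_le]
    intro f _ s hs
    show π ⁅f, s⁆ = 1
    rw [map_commutatorElement, commutatorElement_eq_one_iff_mul_comm]
    exact Subgroup.mem_center_iff.mp (hSZ s hs) (π f)
  have hKC : K ≤ C := by
    rw [hKdef, hCdef, _root_.commutator_def]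
    exact Subgroup.commutator_mono le_top le_top
  have hDK : D ≤ K := Subgroup.commutator_mono le_rfl hRS
  set SC := S ⊓ C with hSCdef
  set RC := R ⊓ C with hRCdef
  have hRCle : RC ≤ SC := inf_le_inf hRS le_rfl
  have hKSC : K ≤ SC := le_inf (hKR.trans hRS) hKC
  have hDRC : D ≤ RC := le_inf (Subgroup.commutator_le_right ⊤ R)
    ((Subgroup.commutator_mono le_rfl le_top).trans (le_of_eq (hCdef ▸ (_root_.commutator_def F).symm)))
  -- the Hopf quotient of the presentation `πQ : F ↠ Qb`
  haveI : (K.subgroupOf SC).Normal := Subgroup.normal_subgroupOf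
  haveI : (D.subgroupOf RC).Normal := Subgroup.normal_subgroupOf
  haveI : (K.subgroupOf RC).Normal := Subgroup.normal_subgroupOf
  -- comparison of the two presentations of `Qb`
  have hlid : Function.Surjective (FreeGroup.lift (id : Qb → Qb)) := fun q =>
    ⟨FreeGroup.of q, FreeGroup.lift_apply_of⟩
  obtain ⟨e⟩ := hopfQuot_equiv (FreeGroup.lift (id : Qb → Qb)) πQ hlid hπQs
  have hcard1 : Nat.card (schurMultiplier Qb)
      = Nat.card (↥SC ⧸ K.subgroupOf SC) := Nat.card_congr e.toEquiv
  -- `ρ` realizes `T ⧸ N ≅ G'`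
  set ρ : ↥SC ⧸ K.subgroupOf SC →* G :=
    QuotientGroup.lift (K.subgroupOf SC) (π.comp SC.subtype)
      (fun x hx => by
        show π (x : F) = 1
        exact hKR (Subgroup.mem_subgroupOf.mp hx)) with hρdef
  set ι : ↥RC →* ↥SC ⧸ K.subgroupOf SC :=
    (QuotientGroup.mk' (K.subgroupOf SC)).comp (Subgroup.inclusion hRCle) with hιdef
  have hkerρ : ρ.ker = ι.range := by
    ext x
    constructor
    · intro hx
      induction x using QuotientGroup.induction_on with
      | _ y =>
        have h1 : π (y : F) = 1 := hx
        refine ⟨⟨(y : F), Subgroup.mem_inf.mpr ⟨h1, (Subgroup.mem_inf.mp y.2).2⟩⟩, ?_⟩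
        show QuotientGroup.mk (Subgroup.inclusion hRCle _) = QuotientGroup.mk y
        congr 1
    · rintro ⟨z, rfl⟩
      show π ((Subgroup.inclusion hRCle z : ↥SC) : F) = 1
      exact (Subgroup.mem_inf.mp z.2).1
  have hrangeρ : ρ.range = _root_.commutator G := by
    have h1 : ρ.range = Subgroup.map π SC := by
      ext g
      constructor
      · rintro ⟨x, rfl⟩
        induction x using QuotientGroup.induction_on with
        | _ y => exact ⟨(y : F), y.2, rfl⟩
      · rintro ⟨f, hf, rfl⟩
        exact ⟨QuotientGroup.mk (⟨f, hf⟩ : ↥SC), rfl⟩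
    rw [h1, show SC = C from inf_eq_right.mpr hCS, hCdef, _root_.commutator_def,
      Subgroup.map_commutator, Subgroup.map_top_of_surjective π hπs, ← _root_.commutator_def]
  have hcardT : Nat.card (↥SC ⧸ K.subgroupOf SC) = p * Nat.card ι.range := by
    rw [Subgroup.card_eq_card_quotient_mul_card_subgroup ρ.ker]
    congr 1
    · rw [Nat.card_congr (QuotientGroup.quotientKerEquivRange ρ).toEquiv,
        show ρ.range = _root_.commutator G from hrangeρ, hG']
    · rw [hkerρ]
  -- `ι.range ≅ (R ∩ C)/K`
  have hι : ι.ker = K.subgroupOf RC := by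
    ext z
    show (QuotientGroup.mk (Subgroup.inclusion hRCle z) : ↥SC ⧸ K.subgroupOf SC) = 1 ↔ _
    rw [QuotientGroup.eq_one_iff, Subgroup.mem_subgroupOf, Subgroup.mem_subgroupOf,
      Subgroup.coe_inclusion]
  have hcardN : Nat.card ι.range = Nat.card (↥RC ⧸ K.subgroupOf RC) := by
    rw [← hι]
    exact (Nat.card_congr (QuotientGroup.quotientKerEquivRange ι).toEquiv).symm
  -- the image of `K` in `F ⧸ D` and its finiteness
  set mD : F →* F ⧸ D := QuotientGroup.mk' D with hmDdef
  have hcentR : ∀ r ∈ R, mD r ∈ Subgroup.center (F ⧸ D) := fun r hr => mk_mem_center R hr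
  have hmD_one : ∀ x ∈ D, mD x = 1 := fun x hx => (QuotientGroup.eq_one_iff x).mpr hx
  have hinv1 : ∀ f f' s : F, π f = π f' → mD ⁅f, s⁆ = mD ⁅f', s⁆ := by
    intro f f' s hff
    have hr : f⁻¹ * f' ∈ R := by
      show π (f⁻¹ * f') = 1
      rw [map_mul, map_inv, hff]
      simp
    have hid : ⁅f', s⁆ = (f * ⁅f⁻¹ * f', s⁆ * f⁻¹) * ⁅f, s⁆ :=
      (fun {H : Type _} [Group H] (f f' s : H) =>
        (by group : ⁅f', s⁆ = (f * ⁅f⁻¹ * f', s⁆ * f⁻¹) * ⁅f, s⁆)) f f' s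
    have hD1 : ⁅f⁻¹ * f', s⁆ ∈ D := by
      have h2 : ⁅f⁻¹ * f', s⁆ ∈ ⁅R, (⊤ : Subgroup F)⁆ :=
        commutator_mem_commutator hr (Subgroup.mem_top _)
      rwa [Subgroup.commutator_comm] at h2
    rw [hid, map_mul, map_mul, map_mul, hmD_one _ hD1]
    simp
  have hinv2 : ∀ f s s' : F, π s = π s' → mD ⁅f, s⁆ = mD ⁅f, s'⁆ := by
    intro f s s' hss
    have hr : s⁻¹ * s' ∈ R := by
      show π (s⁻¹ * s') = 1
      rw [map_mul, map_inv, hss]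
      simp
    have hid : ⁅f, s'⁆ = ⁅f, s⁆ * (s * ⁅f, s⁻¹ * s'⁆ * s⁻¹) :=
      (fun {H : Type _} [Group H] (f s s' : H) =>
        (by group : ⁅f, s'⁆ = ⁅f, s⁆ * (s * ⁅f, s⁻¹ * s'⁆ * s⁻¹))) f s s'
    have hD1 : ⁅f, s⁻¹ * s'⁆ ∈ D := commutator_mem_commutator (Subgroup.mem_top _) hr
    rw [hid, map_mul, map_mul, map_mul, hmD_one _ hD1]
    simp
  have hcentv : ∀ f s : F, s ∈ S → mD ⁅f, s⁆ ∈ Subgroup.center (F ⧸ D) := fun f s hs =>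
    hcentR _ (hKR (commutator_mem_commutator (Subgroup.mem_top _) hs))
  have hpowv : ∀ f s : F, s ∈ S → (mD ⁅f, s⁆) ^ p = 1 := by
    intro f s hs
    have hpows : ∀ k : ℕ, mD ⁅f, s ^ k⁆ = (mD ⁅f, s⁆) ^ k := by
      intro k
      induction k with
      | zero => simp
      | succ k ih =>
        have hid : ⁅f, s ^ (k + 1)⁆ = ⁅f, s⁆ * (s * ⁅f, s ^ k⁆ * s⁻¹) := by
          rw [pow_succ']
          simp only [commutatorElement_def, mul_assoc, mul_inv_cancel_left, inv_mul_cancel_left, mul_inv_rev, inv_inv, inv_mul_cancel, mul_inv_cancel, mul_one]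
        have hcent' := Subgroup.mem_center_iff.mp (hcentv f (s ^ k) (pow_mem hs k)) (mD s)
        rw [hid, map_mul, map_mul, map_mul]
        have hc : mD s * mD ⁅f, s ^ k⁆ * mD s⁻¹ = mD ⁅f, s ^ k⁆ := by
          rw [show mD s⁻¹ = (mD s)⁻¹ from map_inv mD s, hcent', mul_inv_cancel_right]
        rw [hc, ih, ← pow_succ']
    have hsp : π (s ^ p) = 1 := by
      have hsSp : π s ∈ _root_.commutator G := by rw [← hker_of]; exact hs
      have h2 : (⟨π s, hsSp⟩ : ↥(_root_.commutator G)) ^ p = 1 := by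
        rw [← hG']
        exact pow_card_eq_one'
      have h3 := congrArg (Subtype.val) h2
      rw [map_pow]
      simpa using h3
    have hD1 : ⁅f, s ^ p⁆ ∈ D := commutator_mem_commutator (Subgroup.mem_top _) hsp
    rw [← hpows p]
    exact hmD_one _ hD1
  -- the image of `K` in `F ⧸ D` is finite
  have hKgen : K.map mD = Subgroup.closure
      (mD '' {g | ∃ g₁ ∈ (⊤ : Subgroup F), ∃ g₂ ∈ S, ⁅g₁, g₂⁆ = g}) := by
    rw [hKdef, Subgroup.commutator_def, MonoidHom.map_closure]
  set V : Set (F ⧸ D) := mD '' {g | ∃ g₁ ∈ (⊤ : Subgroup F), ∃ g₂ ∈ S, ⁅g₁, g₂⁆ = g} with hVdef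
  have hVcent : ∀ v ∈ V, v ∈ Subgroup.center (F ⧸ D) := by
    rintro v ⟨g, ⟨g₁, -, g₂, hg₂, rfl⟩, rfl⟩
    exact hcentv g₁ g₂ hg₂
  have hVpow : ∀ v ∈ V, v ^ p = 1 := by
    rintro v ⟨g, ⟨g₁, -, g₂, hg₂, rfl⟩, rfl⟩
    exact hpowv g₁ g₂ hg₂
  have hVfin : V.Finite := by
    have hsub : V ⊆ Set.range (fun gh : G × G => mD ⁅FreeGroup.of gh.1, FreeGroup.of gh.2⁆) := by
      rintro v ⟨g, ⟨g₁, -, g₂, hg₂, rfl⟩, rfl⟩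
      refine ⟨(π g₁, π g₂), ?_⟩
      show mD ⁅FreeGroup.of (π g₁), FreeGroup.of (π g₂)⁆ = mD ⁅g₁, g₂⁆
      exact (hinv1 (FreeGroup.of (π g₁)) g₁ (FreeGroup.of (π g₂)) FreeGroup.lift_apply_of).trans
        (hinv2 g₁ (FreeGroup.of (π g₂)) g₂ FreeGroup.lift_apply_of)
    exact Set.Finite.subset (Set.finite_range _) hsub
  have hclosfin : Finite (Subgroup.closure V) := by
    set Z := Subgroup.center (F ⧸ D) with hZdef
    set V₀ : Set ↥Z := Subtype.val ⁻¹' V with hV₀def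
    have himg : Subtype.val '' V₀ = V := by
      ext v
      constructor
      · rintro ⟨z, hz, rfl⟩
        exact hz
      · intro hv
        exact ⟨⟨v, hVcent v hv⟩, hv, rfl⟩
    have hV₀fin : V₀.Finite := hVfin.preimage (Set.injOn_of_injective Subtype.val_injective)
    letI : CommGroup ↥Z := { (inferInstance : Group ↥Z) with
      mul_comm := fun a b => Subtype.ext (Subgroup.mem_center_iff.mp b.2 a) }
    have h₀ : Finite (Subgroup.closure V₀) :=
      finite_closure_of_comm hp.pos hV₀fin (fun v hv => Subtype.ext (by
        have h3 := hVpow (v : F ⧸ D) hv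
        rw [SubmonoidClass.coe_pow]
        exact h3))
    have hmap : Subgroup.closure V = Subgroup.map Z.subtype (Subgroup.closure V₀) := by
      rw [MonoidHom.map_closure]
      congr 1
      rw [show (⇑Z.subtype '' V₀ : Set (F ⧸ D)) = Subtype.val '' V₀ from rfl, himg]
    rw [hmap]
    have hfin2 : (Subgroup.map Z.subtype (Subgroup.closure V₀) : Set (F ⧸ D)).Finite := by
      rw [Subgroup.coe_map]
      exact (Set.finite_coe_iff.mp h₀).image _
    exact Set.finite_coe_iff.mpr hfin2
  have hKmapfin : Finite (K.map mD) := by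
    rw [hKgen]
    exact hclosfin
  -- the kernel of `M(G) → (R ∩ C)/K` is finite
  set j : (↥RC ⧸ D.subgroupOf RC) →* F ⧸ D :=
    QuotientGroup.map (D.subgroupOf RC) D RC.subtype le_rfl with hjdef
  have hjinj : Function.Injective j := by
    rw [injective_iff_map_eq_one]
    intro a
    induction a using QuotientGroup.induction_on with
    | _ y =>
      intro ha
      have h1 : (((y : ↥RC) : F) : F ⧸ D) = 1 := ha
      rw [QuotientGroup.eq_one_iff] at h1
      show (QuotientGroup.mk y : ↥RC ⧸ D.subgroupOf RC) = 1
      rw [QuotientGroup.eq_one_iff]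
      exact Subgroup.mem_subgroupOf.mpr h1
  set Kbar := (K.subgroupOf RC).map (QuotientGroup.mk' (D.subgroupOf RC)) with hKbardef
  haveI hKbarn : Kbar.Normal := Subgroup.Normal.map inferInstance _
    (QuotientGroup.mk'_surjective _)
  have hKbarfin : Finite Kbar := by
    haveI := hKmapfin
    have hmem : ∀ x : ↥Kbar, j (x : ↥RC ⧸ D.subgroupOf RC) ∈ K.map mD := by
      rintro ⟨x, hx⟩
      obtain ⟨y, hy, rfl⟩ := hx
      exact ⟨(y : F), Subgroup.mem_subgroupOf.mp hy, rfl⟩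
    have hinj2 : Function.Injective (fun x : ↥Kbar => (⟨j ↑x, hmem x⟩ : ↥(K.map mD))) :=
      fun a b h => Subtype.ext (hjinj (congrArg Subtype.val h))
    exact Finite.of_injective _ hinj2
  -- factor `|M(G)| = |(R ∩ C)/K| * |Kbar|`
  have hDKsub : D.subgroupOf RC ≤ K.subgroupOf RC := fun x hx =>
    Subgroup.mem_subgroupOf.mpr (hDK (Subgroup.mem_subgroupOf.mp hx))
  have hquotquot := QuotientGroup.quotientQuotientEquivQuotient
      (D.subgroupOf RC) (K.subgroupOf RC) hDKsub
  have hcardM : Nat.card (schurMultiplier G)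
      = Nat.card (↥RC ⧸ K.subgroupOf RC) * Nat.card Kbar := by
    have h0 : Nat.card (↥RC ⧸ D.subgroupOf RC)
        = Nat.card ((↥RC ⧸ D.subgroupOf RC) ⧸ Kbar) * Nat.card Kbar :=
      Subgroup.card_eq_card_quotient_mul_card_subgroup Kbar
    have h1 : Nat.card ((↥RC ⧸ D.subgroupOf RC) ⧸ Kbar)
        = Nat.card (↥RC ⧸ K.subgroupOf RC) := Nat.card_congr hquotquot.toEquiv
    show Nat.card (↥RC ⧸ D.subgroupOf RC) = _
    rw [h0, h1]
  have hKbarpos : 0 < Nat.card Kbar := by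
    haveI := hKbarfin
    exact Nat.card_pos
  calc Nat.card (schurMultiplier Qb)
      = Nat.card (↥SC ⧸ K.subgroupOf SC) := hcard1
    _ = p * Nat.card ι.range := hcardT
    _ = p * Nat.card (↥RC ⧸ K.subgroupOf RC) := by rw [hcardN]
    _ ≤ p * (Nat.card (↥RC ⧸ K.subgroupOf RC) * Nat.card Kbar) :=
        Nat.mul_le_mul_left p (Nat.le_mul_of_pos_right _ hKbarpos)
    _ = Nat.card (schurMultiplier G) * p := by rw [← hcardM]; ring

end Main
end

section
/- Let G be a finite non-abelian p-group of order p^n (n ≥ 6), |G'| = p, and suppose G/G' is elementary abelian of rank n-1. Then |M(G)| ≥ p^{(n-1)(n-2)/2 - 1}. -/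
open scoped commutatorElement

namespace SchurAux

variable {p m : ℕ}

abbrev Idx (m : ℕ) := {q : Fin m × Fin m // q.1 < q.2}

/-- bilinear cocycle -/
def bil (v w : Fin m → ZMod p) : Idx m → ZMod p := fun x => v x.1.1 * w x.1.2

lemma bil_add_left (v w u : Fin m → ZMod p) : bil (v + w) u = bil v u + bil w u := by
  funext x; simp [bil, add_mul]

lemma bil_add_right (v w u : Fin m → ZMod p) : bil v (w + u) = bil v w + bil v u := by
  funext x; simp [bil, mul_add]

@[simp] lemma bil_zero_left (w : Fin m → ZMod p) : bil 0 w = 0 := by funext x; simp [bil]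
@[simp] lemma bil_zero_right (v : Fin m → ZMod p) : bil v 0 = 0 := by funext x; simp [bil]
lemma bil_neg_left (v w : Fin m → ZMod p) : bil (-v) w = - bil v w := by funext x; simp [bil]
lemma bil_neg_right (v w : Fin m → ZMod p) : bil v (-w) = - bil v w := by funext x; simp [bil]

/-- The central extension `(ZMod p)^m × Λ²` with multiplication twisted by `bil`. -/
@[ext] structure EGrp (p m : ℕ) where
  v : Fin m → ZMod p
  c : Idx m → ZMod p

namespace EGrp

instance : Mul (EGrp p m) := ⟨fun a b => ⟨a.v + b.v, a.c + b.c + bil a.v b.v⟩⟩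
instance : One (EGrp p m) := ⟨⟨0, 0⟩⟩
instance : Inv (EGrp p m) := ⟨fun a => ⟨-a.v, -a.c + bil a.v a.v⟩⟩

@[simp] lemma mul_v (a b : EGrp p m) : (a * b).v = a.v + b.v := rfl
@[simp] lemma mul_c (a b : EGrp p m) : (a * b).c = a.c + b.c + bil a.v b.v := rfl
@[simp] lemma one_v : (1 : EGrp p m).v = 0 := rfl
@[simp] lemma one_c : (1 : EGrp p m).c = 0 := rfl
@[simp] lemma inv_v (a : EGrp p m) : (a⁻¹).v = -a.v := rfl
@[simp] lemma inv_c (a : EGrp p m) : (a⁻¹).c = -a.c + bil a.v a.v := rfl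

instance : Group (EGrp p m) where
  mul_assoc a b d := by
    ext x <;> simp [bil_add_left, bil_add_right, bil] <;> ring
  one_mul a := by ext x <;> simp
  mul_one a := by ext x <;> simp
  inv_mul_cancel a := by ext x <;> simp [bil_neg_left]

instance [NeZero p] : Finite (EGrp p m) := by
  apply Finite.of_surjective
    (fun x : ((Fin m → ZMod p) × (Idx m → ZMod p)) => (⟨x.1, x.2⟩ : EGrp p m))
  rintro ⟨v, c⟩; exact ⟨(v, c), rfl⟩

/-- first projection as a hom -/
def fstHom : EGrp p m →* Multiplicative (Fin m → ZMod p) where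
  toFun a := Multiplicative.ofAdd a.v
  map_one' := rfl
  map_mul' a b := rfl

lemma fstHom_eq_one_iff (a : EGrp p m) : fstHom a = 1 ↔ a.v = 0 := by
  constructor
  · intro h; exact h
  · intro h; simpa [fstHom] using h

lemma mem_center_of_v_eq_zero (a : EGrp p m) (h : a.v = 0) :
    a ∈ Subgroup.center (EGrp p m) := by
  rw [Subgroup.mem_center_iff]
  intro b
  ext x <;> simp [h] <;> ring

lemma commutator_eq (a b : EGrp p m) :
    ⁅a, b⁆ = ⟨0, bil a.v b.v - bil b.v a.v⟩ := by
  show a * b * a⁻¹ * b⁻¹ = _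
  ext x <;>
    simp [bil_add_left, bil_add_right, bil_neg_left, bil_neg_right] <;> ring

end EGrp

end SchurAux

namespace SchurAux
variable {p m : ℕ}

lemma bil_single (x₀ : Idx m) (r : ZMod p) :
    bil (Pi.single x₀.1.1 r) (Pi.single x₀.1.2 1)
      - bil (Pi.single x₀.1.2 (1 : ZMod p)) (Pi.single x₀.1.1 r)
      = Pi.single x₀ r := by
  obtain ⟨⟨i, j⟩, hij⟩ := x₀
  funext x
  obtain ⟨⟨a, b⟩, hab⟩ := x
  have hab' : a.val < b.val := hab
  have hij' : i.val < j.val := hij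
  have hx : ((⟨(a, b), hab⟩ : Idx m) = ⟨(i, j), hij⟩) ↔ (a.val = i.val ∧ b.val = j.val) := by
    simp [Subtype.ext_iff, Prod.ext_iff, Fin.ext_iff]
  simp only [bil, Pi.single_apply, Pi.sub_apply, hx, Fin.ext_iff]
  split_ifs <;> first | ring1 | (exfalso; omega)

lemma card_Idx : Nat.card (Idx m) = m * (m - 1) / 2 := by
  have e : Idx m ≃ Σ j : Fin m, Fin j.1 :=
    { toFun := fun x => ⟨x.1.2, ⟨x.1.1.1, x.2⟩⟩
      invFun := fun y => ⟨(⟨y.2.1, lt_trans y.2.2 y.1.2⟩, y.1), y.2.2⟩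
      left_inv := fun x => by ext <;> rfl
      right_inv := fun y => by rcases y with ⟨j, i⟩; rfl }
  rw [Nat.card_congr e]
  simp only [Nat.card_eq_fintype_card, Fintype.card_sigma, Fintype.card_fin]
  rw [Fin.sum_univ_eq_sum_range (fun i => i) m, Finset.sum_range_id]

end SchurAux

namespace SchurAux

private lemma exists_surj_hom_aux (k m : ℕ) [Fact (k+1).Prime] (Q : Type*) [CommGroup Q]
    [Finite Q] (hcard : Nat.card Q = (k+1) ^ m) (hexp : ∀ x : Q, x ^ (k+1) = 1) :
    ∃ μ : Q →* Multiplicative (Fin m → ZMod (k+1)), Function.Surjective μ := by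
  letI : Module (ZMod (k+1)) (Additive Q) := AddCommGroup.zmodModule (by
    intro x
    show (k+1) • x = 0
    have : (x.toMul) ^ (k+1) = 1 := hexp _
    rw [← toMul_nsmul] at this
    exact toMul_eq_one.mp this)
  haveI : Module.Finite (ZMod (k+1)) (Additive Q) := Module.Finite.of_finite
  haveI : Fintype (Additive Q) := Fintype.ofFinite _
  have hfr : Module.finrank (ZMod (k+1)) (Additive Q) = m := by
    have h1 : Fintype.card (Additive Q)
        = (k+1) ^ Module.finrank (ZMod (k+1)) (Additive Q) := by
      have := Module.card_eq_pow_finrank (K := ZMod (k+1)) (V := Additive Q)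
      simpa [ZMod.card] using this
    have h2 : Fintype.card (Additive Q) = (k+1) ^ m := by
      rw [← Nat.card_eq_fintype_card, ← hcard]
      exact Nat.card_congr Additive.toMul
    exact Nat.pow_right_injective (Fact.out : (k+1).Prime).two_le (h1.symm.trans h2)
  let b : Module.Basis (Fin m) (ZMod (k+1)) (Additive Q) :=
    Module.finBasisOfFinrankEq (ZMod (k+1)) (Additive Q) hfr
  let e : Additive Q ≃+ (Fin m → ZMod (k+1)) := b.equivFun.toAddEquiv
  refine ⟨{ toFun := fun x => Multiplicative.ofAdd (e (Additive.ofMul x)),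
            map_one' := ?_, map_mul' := ?_ }, ?_⟩
  · simp
  · intro x y
    show Multiplicative.ofAdd (e (Additive.ofMul x + Additive.ofMul y)) = _
    rw [map_add]
    rfl
  · intro v
    refine ⟨Additive.toMul (e.symm v.toAdd), ?_⟩
    simp

lemma exists_surj_hom (p m : ℕ) [Fact p.Prime] (Q : Type*) [CommGroup Q] [Finite Q]
    (hcard : Nat.card Q = p ^ m) (hexp : ∀ x : Q, x ^ p = 1) :
    ∃ μ : Q →* Multiplicative (Fin m → ZMod p), Function.Surjective μ := by
  obtain ⟨k, rfl⟩ : ∃ k, p = k + 1 := ⟨p - 1, by have := (Fact.out : p.Prime).pos; omega⟩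
  exact exists_surj_hom_aux k m Q hcard hexp

end SchurAux

namespace SchurAux

lemma comm_central_right {H : Type*} [Group H] (a b z : H) (hz : z ∈ Subgroup.center H) :
    ⁅a * z, b⁆ = ⁅a, b⁆ := by
  have hzb : b * z = z * b := Subgroup.mem_center_iff.mp hz b
  calc ⁅a * z, b⁆ = a * (z * b) * z⁻¹ * a⁻¹ * b⁻¹ := by group
    _ = a * (b * z) * z⁻¹ * a⁻¹ * b⁻¹ := by rw [← hzb]
    _ = ⁅a, b⁆ := by group

lemma comm_central_right' {H : Type*} [Group H] (a b z : H) (hz : z ∈ Subgroup.center H) :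
    ⁅a, b * z⁆ = ⁅a, b⁆ := by
  have hza : a⁻¹ * z = z * a⁻¹ := Subgroup.mem_center_iff.mp hz a⁻¹
  calc ⁅a, b * z⁆ = a * b * (z * a⁻¹) * z⁻¹ * b⁻¹ := by group
    _ = a * b * (a⁻¹ * z) * z⁻¹ * b⁻¹ := by rw [hza]
    _ = ⁅a, b⁆ := by group

lemma finite_commutatorSet_of_central {H : Type*} [Group H] (Z : Subgroup H)
    (hZ : Z ≤ Subgroup.center H) [Finite (H ⧸ Z)] : Finite (commutatorSet H) := by
  have hsub : commutatorSet H ⊆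
      Set.range (fun q : (H ⧸ Z) × (H ⧸ Z) => ⁅q.1.out, q.2.out⁆) := by
    rintro x ⟨a, b, rfl⟩
    refine ⟨(QuotientGroup.mk a, QuotientGroup.mk b), ?_⟩
    have ha : (QuotientGroup.mk a : H ⧸ Z).out = a * (a⁻¹ * (QuotientGroup.mk a : H ⧸ Z).out) := by
      group
    have hb : (QuotientGroup.mk b : H ⧸ Z).out = b * (b⁻¹ * (QuotientGroup.mk b : H ⧸ Z).out) := by
      group
    have hza : a⁻¹ * (QuotientGroup.mk a : H ⧸ Z).out ∈ Z := by
      rw [← QuotientGroup.eq]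
      exact (QuotientGroup.out_eq' _).symm
    have hzb : b⁻¹ * (QuotientGroup.mk b : H ⧸ Z).out ∈ Z := by
      rw [← QuotientGroup.eq]
      exact (QuotientGroup.out_eq' _).symm
    show ⁅(QuotientGroup.mk a : H ⧸ Z).out, (QuotientGroup.mk b : H ⧸ Z).out⁆ = ⁅a, b⁆
    rw [ha, hb, comm_central_right _ _ _ (hZ hza), comm_central_right' _ _ _ (hZ hzb)]
  exact ((Set.finite_range _).subset hsub).to_subtype

end SchurAux

namespace SchurAux2
open SchurAux

lemma finite_hopf (G : Type*) [Group G] [Finite G] :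
    Finite (↥((FreeGroup.lift (id : G → G)).ker ⊓ commutator (FreeGroup G)) ⧸
      Subgroup.subgroupOf ⁅(⊤ : Subgroup (FreeGroup G)), (FreeGroup.lift (id : G → G)).ker⁆
        ((FreeGroup.lift (id : G → G)).ker ⊓ commutator (FreeGroup G))) := by
  set F := FreeGroup G
  set π : F →* G := FreeGroup.lift (id : G → G) with hπ
  set R : Subgroup F := π.ker with hR
  set D : Subgroup F := commutator F with hD
  set N : Subgroup F := ⁅(⊤ : Subgroup F), R⁆ with hN
  have hNR : N ≤ R := Subgroup.commutator_le_right ⊤ R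
  -- quotient H and its central subgroup
  let H := F ⧸ N
  let Z : Subgroup H := R.map (QuotientGroup.mk' N)
  have hZ : Z ≤ Subgroup.center H := by
    rintro z ⟨r, hr, rfl⟩
    rw [Subgroup.mem_center_iff]
    intro h
    induction h using QuotientGroup.induction_on with
    | _ f =>
      show QuotientGroup.mk (f * r) = QuotientGroup.mk (r * f)
      rw [QuotientGroup.eq]
      have : ⁅r⁻¹, f⁻¹⁆ ∈ N := by
        rw [hN, Subgroup.commutator_comm]
        exact Subgroup.commutator_mem_commutator (Subgroup.inv_mem _ hr) (Subgroup.mem_top _)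
      convert this using 1
      show (f * r)⁻¹ * (r * f) = r⁻¹ * f⁻¹ * r⁻¹⁻¹ * f⁻¹⁻¹
      simp only [mul_inv_rev, inv_inv, mul_assoc]
      exact congrArg (fun x => r⁻¹ * (f⁻¹ * x)) (congrArg₂ (· * ·) (inv_inv r).symm (inv_inv f).symm)
  haveI : Finite (F ⧸ R) := Finite.of_equiv _ (QuotientGroup.quotientKerEquivRange π).symm.toEquiv
  haveI : Finite (H ⧸ Z) :=
    Finite.of_equiv _ (QuotientGroup.quotientQuotientEquivQuotient N R hNR).symm.toEquiv
  haveI : Finite (commutatorSet H) := finite_commutatorSet_of_central Z hZ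
  haveI : Finite (_root_.commutator H) := inferInstance
  -- embed the Hopf quotient into `commutator H`
  let χ₀ : (R ⊓ D : Subgroup F) →* H := (QuotientGroup.mk' N).comp (R ⊓ D).subtype
  have hker : ∀ x : (R ⊓ D : Subgroup F), x ∈ N.subgroupOf (R ⊓ D) → χ₀ x = 1 := by
    intro x hx
    have hxN : (x : F) ∈ N := hx
    show (QuotientGroup.mk (x : F) : F ⧸ N) = 1
    exact (QuotientGroup.eq_one_iff _).mpr hxN
  let χ : ((R ⊓ D : Subgroup F) ⧸ N.subgroupOf (R ⊓ D)) →* H :=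
    QuotientGroup.lift _ χ₀ hker
  have hmem : ∀ x, χ x ∈ _root_.commutator H := by
    intro x
    induction x using QuotientGroup.induction_on with
    | _ a =>
      have h1 : χ (QuotientGroup.mk a) = QuotientGroup.mk (a : F) := rfl
      rw [h1]
      have h2 : (a : F) ∈ D := a.2.2
      have h3 : QuotientGroup.mk (a : F) ∈ D.map (QuotientGroup.mk' N) :=
        Subgroup.mem_map.mpr ⟨a, h2, rfl⟩
      have h3' : (QuotientGroup.mk (a : F) : F ⧸ N)
          ∈ Subgroup.map (QuotientGroup.mk' N) ⁅(⊤ : Subgroup F), (⊤ : Subgroup F)⁆ := h3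
      rw [Subgroup.map_commutator] at h3'
      exact Subgroup.commutator_mono le_top le_top h3'
  have hinj : Function.Injective χ := by
    intro x y h
    induction x using QuotientGroup.induction_on with
    | _ a =>
    induction y using QuotientGroup.induction_on with
    | _ b =>
      rw [QuotientGroup.eq]
      have hab : (QuotientGroup.mk (a : F) : H) = QuotientGroup.mk (b : F) := h
      rw [QuotientGroup.eq] at hab
      exact hab
  exact Finite.of_injective
    (fun x => (⟨χ x, hmem x⟩ : _root_.commutator H))
    (fun x y hxy => hinj (congrArg Subtype.val hxy))

end SchurAux2

open SchurAux SchurAux2 in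
/-- If `G` is a finite non-abelian `p`-group of order `p^n` (`n ≥ 6`) with `|G'| = p` and
`G/G'` elementary abelian of rank `n - 1`, then `|M(G)| ≥ p^((n-1)(n-2)/2 - 1)`. -/
theorem card_schurMultiplier_ge_of_commutator_card_p (p n : ℕ) (hp : p.Prime) (hn : 6 ≤ n)
    (G : Type*) [Group G] (hG : Nat.card G = p ^ n)
    (hna : ∃ a b : G, a * b ≠ b * a)
    (hG' : Nat.card (commutator G) = p)
    (hcard : Nat.card (Abelianization G) = p ^ (n - 1))
    (helem : ∀ x : Abelianization G, x ^ p = 1) :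
    p ^ ((n - 1) * (n - 2) / 2 - 1) ≤ Nat.card (schurMultiplier G) := by
  haveI hpf : Fact p.Prime := ⟨hp⟩
  haveI : NeZero p := ⟨hp.pos.ne'⟩
  haveI : Finite G := Nat.finite_of_card_ne_zero (by rw [hG]; exact pow_ne_zero _ hp.pos.ne')
  set m := n - 1 with hm
  -- a surjective homomorphism onto (ZMod p)^m
  obtain ⟨μ, hμ⟩ := SchurAux.exists_surj_hom p m (Abelianization G) hcard helem
  set ν : G →* Multiplicative (Fin m → ZMod p) := μ.comp Abelianization.of with hνdef
  have hofsurj : Function.Surjective (Abelianization.of : G →* Abelianization G) :=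
    fun y => Quotient.inductionOn' y fun g => ⟨g, rfl⟩
  have hν : Function.Surjective ν := hμ.comp hofsurj
  -- setup
  set F := FreeGroup G with hF
  set π : F →* G := FreeGroup.lift (id : G → G) with hπdef
  have hπs : Function.Surjective π := fun g => ⟨FreeGroup.of g, by rw [hπdef, FreeGroup.lift_apply_of]; rfl⟩
  set R : Subgroup F := π.ker with hRdef
  set D : Subgroup F := _root_.commutator F with hDdef
  set N : Subgroup F := ⁅(⊤ : Subgroup F), R⁆ with hNdef
  have hDtop : D = ⁅(⊤ : Subgroup F), (⊤ : Subgroup F)⁆ := rfl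
  -- the homomorphism Φ into the concrete class-2 group
  set Φ : F →* EGrp p m := FreeGroup.lift (fun g => ⟨(ν g).toAdd, 0⟩) with hΦdef
  have hΦof : ∀ g : G, Φ (FreeGroup.of g) = ⟨(ν g).toAdd, 0⟩ := by
    intro g; exact FreeGroup.lift_apply_of
  have hcompat : (EGrp.fstHom).comp Φ = ν.comp π := by
    apply FreeGroup.ext_hom
    intro x
    simp only [MonoidHom.comp_apply, hΦof]
    have : π (FreeGroup.of x) = x := by rw [hπdef, FreeGroup.lift_apply_of]; rfl
    rw [this]
    rfl
  have hΦR : ∀ r ∈ R, (Φ r).v = 0 := by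
    intro r hr
    have h1 : EGrp.fstHom (Φ r) = 1 := by
      have := DFunLike.congr_fun hcompat r
      simp only [MonoidHom.comp_apply] at this
      rw [this, MonoidHom.mem_ker.mp hr, map_one]
    exact (EGrp.fstHom_eq_one_iff _).mp h1
  have hΦRc : ∀ r ∈ R, Φ r ∈ Subgroup.center (EGrp p m) :=
    fun r hr => EGrp.mem_center_of_v_eq_zero _ (hΦR r hr)
  -- C = Φ(D) is exactly the "alternating part"
  set C : Subgroup (EGrp p m) := D.map Φ with hCdef
  have hCle : C ≤ EGrp.fstHom.ker := by
    rw [hCdef, hDtop, Subgroup.map_commutator]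
    rw [Subgroup.commutator_le]
    intro g _ h _
    rw [MonoidHom.mem_ker, map_commutatorElement]
    exact commutatorElement_eq_one_iff_commute.mpr (mul_comm _ _)
  have hCge : EGrp.fstHom.ker ≤ C := by
    intro a ha
    have hav : a.v = 0 := (EGrp.fstHom_eq_one_iff _).mp ha
    -- the set of `c` with (0,c) ∈ C is an additive subgroup
    let T : AddSubgroup (Idx m → ZMod p) :=
      { carrier := {c | (⟨0, c⟩ : EGrp p m) ∈ C}
        zero_mem' := by
          show ((⟨0, 0⟩ : EGrp p m) ∈ C)
          exact (one_mem C : (1 : EGrp p m) ∈ C)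
        add_mem' := by
          intro x y hx hy
          have hx' : (⟨0, x⟩ : EGrp p m) ∈ C := hx
          have hy' : (⟨0, y⟩ : EGrp p m) ∈ C := hy
          have h := mul_mem hx' hy'
          have he : (⟨0, x⟩ : EGrp p m) * ⟨0, y⟩ = ⟨0, x + y⟩ := by
            ext <;> simp
          rwa [he] at h
        neg_mem' := by
          intro x hx
          have hx' : (⟨0, x⟩ : EGrp p m) ∈ C := hx
          have h := inv_mem hx'
          have he : (⟨0, x⟩ : EGrp p m)⁻¹ = ⟨0, -x⟩ := by
            ext <;> simp
          rwa [he] at h }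
    have hT : ∀ c, c ∈ T := by
      have hgen : ∀ (x₀ : Idx m) (r : ZMod p), Pi.single x₀ r ∈ T := by
        intro x₀ r
        obtain ⟨g, hg⟩ := hν (Multiplicative.ofAdd (Pi.single x₀.1.1 r))
        obtain ⟨h, hh⟩ := hν (Multiplicative.ofAdd (Pi.single x₀.1.2 (1 : ZMod p)))
        have hcm : ⁅FreeGroup.of g, FreeGroup.of h⁆ ∈ D := by
          rw [hDtop]
          exact Subgroup.commutator_mem_commutator (Subgroup.mem_top _) (Subgroup.mem_top _)
        have hval : Φ ⁅FreeGroup.of g, FreeGroup.of h⁆ = ⟨0, Pi.single x₀ r⟩ := by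
          rw [map_commutatorElement, hΦof, hΦof, hg, hh, EGrp.commutator_eq]
          have : (bil (p := p) (Multiplicative.toAdd (Multiplicative.ofAdd (Pi.single x₀.1.1 r)))
              (Multiplicative.toAdd (Multiplicative.ofAdd (Pi.single x₀.1.2 (1 : ZMod p))))
            - bil (Multiplicative.toAdd (Multiplicative.ofAdd (Pi.single x₀.1.2 (1 : ZMod p))))
              (Multiplicative.toAdd (Multiplicative.ofAdd (Pi.single x₀.1.1 r))))
              = Pi.single x₀ r := bil_single x₀ r
          rw [← this]
        show (⟨0, Pi.single x₀ r⟩ : EGrp p m) ∈ C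
        rw [← hval, hCdef]
        exact Subgroup.mem_map.mpr ⟨_, hcm, rfl⟩
      intro c
      have hsum : c = ∑ x : Idx m, Pi.single x (c x) := (Finset.univ_sum_single c).symm
      rw [hsum]
      exact AddSubgroup.sum_mem T (fun x _ => hgen x (c x))
    have : (⟨0, a.c⟩ : EGrp p m) ∈ C := hT a.c
    have hae : a = ⟨0, a.c⟩ := by ext <;> simp [hav]
    rwa [← hae] at this
  have hC : C = EGrp.fstHom.ker := le_antisymm hCle hCge
  -- cardinality of C
  have hcardC : Nat.card C = p ^ (m * (m - 1) / 2) := by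
    rw [hC]
    have e : (EGrp.fstHom (p := p) (m := m)).ker ≃ (Idx m → ZMod p) :=
      { toFun := fun a => (a : EGrp p m).c
        invFun := fun c => ⟨⟨0, c⟩, by
          show EGrp.fstHom _ = 1
          rw [EGrp.fstHom_eq_one_iff]⟩
        left_inv := fun a => by
          have hv : (a : EGrp p m).v = 0 :=
            (EGrp.fstHom_eq_one_iff _).mp a.2
          exact Subtype.ext (by ext <;> simp [hv])
        right_inv := fun c => rfl }
    rw [Nat.card_congr e, Nat.card_fun, Nat.card_zmod, card_Idx]
  -- B = Φ(R ⊓ D)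
  set B : Subgroup (EGrp p m) := (R ⊓ D).map Φ with hBdef
  have hBC : B ≤ C := Subgroup.map_mono inf_le_right
  set B' : Subgroup C := B.subgroupOf C with hB'def
  -- the index of B' in C is at most p
  set K : Subgroup D := (π.comp D.subtype).ker with hKdef
  have hrange : (π.comp D.subtype).range = _root_.commutator G := by
    rw [MonoidHom.range_comp, Subgroup.range_subtype, hDtop, Subgroup.map_commutator,
      Subgroup.map_top_of_surjective π hπs]
    rfl
  have hcardDK : Nat.card (D ⧸ K) = p := by
    rw [Nat.card_congr (QuotientGroup.quotientKerEquivRange (π.comp D.subtype)).toEquiv,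
      Nat.card_congr (MulEquiv.subgroupCongr hrange).toEquiv, hG']
  haveI : Finite (D ⧸ K) := Nat.finite_of_card_ne_zero (by rw [hcardDK]; exact hp.pos.ne')
  -- a surjection from D ⧸ K onto the coset space C ⧸ B'
  let s : D → C ⧸ B' := fun d =>
    QuotientGroup.mk (⟨Φ d, Subgroup.mem_map.mpr ⟨d, d.2, rfl⟩⟩ : C)
  have hs_resp : ∀ d₁ d₂ : D, (QuotientGroup.leftRel K) d₁ d₂ → s d₁ = s d₂ := by
    intro d₁ d₂ hrel
    rw [QuotientGroup.leftRel_apply] at hrel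
    apply (QuotientGroup.eq (s := B')).mpr
    have h1 : ((d₁ : F)⁻¹ * (d₂ : F)) ∈ R := hrel
    have h2 : ((d₁ : F)⁻¹ * d₂) ∈ D := mul_mem (inv_mem d₁.2) d₂.2
    show (⟨Φ d₁, _⟩ : C)⁻¹ * ⟨Φ d₂, _⟩ ∈ B'
    rw [Subgroup.mem_subgroupOf]
    show (Φ (d₁ : F))⁻¹ * Φ (d₂ : F) ∈ B
    rw [← map_inv, ← map_mul, hBdef]
    exact Subgroup.mem_map.mpr ⟨_, ⟨h1, h2⟩, rfl⟩
  let sbar : D ⧸ K → C ⧸ B' := Quotient.lift s hs_resp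
  have hsbar : Function.Surjective sbar := by
    intro y
    induction y using QuotientGroup.induction_on with
    | _ c =>
      obtain ⟨d, hd, hΦd⟩ := Subgroup.mem_map.mp c.2
      refine ⟨QuotientGroup.mk (⟨d, hd⟩ : D), ?_⟩
      show s ⟨d, hd⟩ = _
      simp only [s]
      congr 1
      exact Subtype.ext hΦd
  have hcardq : Nat.card (C ⧸ B') ≤ p := by
    have h := Nat.card_le_card_of_surjective sbar hsbar
    omega
  -- |C| = |C ⧸ B'| * |B|
  haveI : Finite (EGrp p m) := inferInstance
  have hprod : Nat.card C = Nat.card (C ⧸ B') * Nat.card B' :=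
    Subgroup.card_eq_card_quotient_mul_card_subgroup B'
  have hB'B : Nat.card B' = Nat.card B :=
    Nat.card_congr (Subgroup.subgroupOfEquivOfLe hBC).toEquiv
  -- surjection from the Schur multiplier onto B
  have hΦN : ∀ x ∈ N, Φ x = 1 := by
    have hle : N ≤ Φ.ker := by
      rw [hNdef, Subgroup.commutator_le]
      intro g _ r hr
      rw [MonoidHom.mem_ker, map_commutatorElement]
      exact commutatorElement_eq_one_iff_commute.mpr
        (Subgroup.mem_center_iff.mp (hΦRc r hr) (Φ g))
    exact fun x hx => hle hx
  let ψ₀ : (R ⊓ D : Subgroup F) →* EGrp p m := Φ.comp (R ⊓ D).subtype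
  have hψker : ∀ x ∈ N.subgroupOf (R ⊓ D), ψ₀ x = 1 := by
    intro x hx
    exact hΦN _ hx
  let ψ : ((R ⊓ D : Subgroup F) ⧸ N.subgroupOf (R ⊓ D)) →* EGrp p m :=
    QuotientGroup.lift _ ψ₀ hψker
  have hmemB : ∀ x, ψ x ∈ B := by
    intro x
    induction x using QuotientGroup.induction_on with
    | _ a => exact Subgroup.mem_map.mpr ⟨a, a.2, rfl⟩
  have hψsurj : Function.Surjective (fun x => (⟨ψ x, hmemB x⟩ : B)) := by
    rintro ⟨b, hb⟩
    obtain ⟨a, ha, rfl⟩ := Subgroup.mem_map.mp hb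
    exact ⟨QuotientGroup.mk ⟨a, ha⟩, rfl⟩
  haveI hfin : Finite ((R ⊓ D : Subgroup F) ⧸ N.subgroupOf (R ⊓ D)) := SchurAux2.finite_hopf G
  have hcardB : Nat.card B ≤ Nat.card (schurMultiplier G) :=
    Nat.card_le_card_of_surjective _ hψsurj
  -- final arithmetic
  have h1 : p ^ (m * (m - 1) / 2) ≤ p * Nat.card B := by
    rw [← hcardC, hprod, hB'B]
    exact Nat.mul_le_mul_right _ hcardq
  have hmn : m * (m - 1) / 2 = (n - 1) * (n - 2) / 2 := by
    have : m - 1 = n - 2 := by omega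
    rw [hm, this]
  rw [hmn] at h1
  have he1 : 1 ≤ (n - 1) * (n - 2) / 2 := by
    have h20 : 20 ≤ (n - 1) * (n - 2) := by
      calc 20 = 5 * 4 := by norm_num
        _ ≤ (n - 1) * (n - 2) := Nat.mul_le_mul (by omega) (by omega)
    omega
  have hsplit : p ^ ((n - 1) * (n - 2) / 2) = p * p ^ ((n - 1) * (n - 2) / 2 - 1) := by
    conv_lhs => rw [show (n - 1) * (n - 2) / 2 = ((n - 1) * (n - 2) / 2 - 1) + 1 by omega]
    rw [pow_succ]
    ring
  rw [hsplit] at h1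
  have h2 : p ^ ((n - 1) * (n - 2) / 2 - 1) ≤ Nat.card B :=
    Nat.le_of_mul_le_mul_left h1 hp.pos
  exact le_trans h2 hcardB
end

section
/- Let G be a finite non-abelian p-group of order p^n (n ≥ 6) with |G'| = p and corank t(G) ≤ n + 1 (i.e. |M(G)| ≥ p^{n(n-1)/2 - n - 1}). Then the center Z(G) has exponent at most p². -/
open Subgroup QuotientGroup
open scoped commutatorElement

set_option linter.unusedSectionVars false

section Hopf

variable {F : Type*} [Group F]

/-- The Hopf quotient `(N ⊓ [F,F]) / [F,N]` for a normal subgroup `N` of `F`. -/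
abbrev HopfQ (N : Subgroup F) : Type _ :=
  ↥(N ⊓ commutator F) ⧸ Subgroup.subgroupOf ⁅(⊤ : Subgroup F), N⁆ (N ⊓ commutator F)

variable {N N' : Subgroup F} [N.Normal] [N'.Normal] {σ : F}

section maps

variable (hc : ⁅(⊤ : Subgroup F), N'⁆ ≤ N)

/-- `⁅x, s⁆` as an element of `N ⊓ [F,F]`, for `s ∈ N'`. -/
def elt (x s : F) (hs : s ∈ N') : ↥(N ⊓ commutator F) :=
  ⟨⁅x, s⁆, ⟨hc (commutator_mem_commutator (mem_top x) hs),
    commutator_def F ▸ commutator_mem_commutator (mem_top x) (mem_top s)⟩⟩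

theorem mk_elt_mul (x : F) {s s' : F} (hs : s ∈ N') (hs' : s' ∈ N') :
    (QuotientGroup.mk (elt hc x (s * s') (mul_mem hs hs')) : HopfQ N)
      = QuotientGroup.mk (elt hc x s hs) * QuotientGroup.mk (elt hc x s' hs') := by
  rw [← QuotientGroup.mk_mul, QuotientGroup.eq, Subgroup.mem_subgroupOf]
  show ⁅x, s * s'⁆⁻¹ * (⁅x, s⁆ * ⁅x, s'⁆) ∈ ⁅(⊤ : Subgroup F), N⁆
  have hid : ⁅x, s * s'⁆⁻¹ * (⁅x, s⁆ * ⁅x, s'⁆) = ⁅s, ⁅x, s'⁆⁻¹⁆ := by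
    simp only [commutatorElement_def]; group
  rw [hid]
  exact commutator_mem_commutator (mem_top s)
    (inv_mem (hc (commutator_mem_commutator (mem_top x) hs')))

/-- For fixed `x`, the map `s ↦ ⁅x,s⁆ mod ⁅F,N⁆` is a homomorphism on `N'`. -/
def gmap (x : F) : ↥N' →* HopfQ N :=
  MonoidHom.mk' (fun s => QuotientGroup.mk (elt hc x s.1 s.2))
    (fun s s' => mk_elt_mul hc x s.2 s'.2)

theorem mk_elt_comm (x y : F) {s : F} (hs : s ∈ N') :
    (QuotientGroup.mk (elt hc x s hs) : HopfQ N) * QuotientGroup.mk (elt hc y s hs)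
      = QuotientGroup.mk (elt hc y s hs) * QuotientGroup.mk (elt hc x s hs) := by
  rw [← QuotientGroup.mk_mul, ← QuotientGroup.mk_mul, QuotientGroup.eq, Subgroup.mem_subgroupOf]
  show (⁅x, s⁆ * ⁅y, s⁆)⁻¹ * (⁅y, s⁆ * ⁅x, s⁆) ∈ ⁅(⊤ : Subgroup F), N⁆
  have hb : ⁅y, s⁆ ∈ N := hc (commutator_mem_commutator (mem_top y) hs)
  have hid : (⁅x, s⁆ * ⁅y, s⁆)⁻¹ * (⁅y, s⁆ * ⁅x, s⁆) = ⁅⁅y, s⁆⁻¹, ⁅x, s⁆⁻¹⁆ := by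
    simp only [commutatorElement_def]; group
  rw [hid]
  exact commutator_mem_commutator (mem_top _) (inv_mem
    (hc (commutator_mem_commutator (mem_top x) hs)))

variable (hσ : σ ∈ N')

/-- The homomorphism `x ↦ ⁅x,σ⁆ mod ⁅F,N⁆` from `F` to the Hopf quotient. -/
def fmap : F →* HopfQ N :=
  MonoidHom.mk' (fun x => QuotientGroup.mk (elt hc x σ hσ))
    (by
      intro x y
      have hb : ⁅y, σ⁆ ∈ N := hc (commutator_mem_commutator (mem_top y) hσ)
      have hA : (QuotientGroup.mk (elt hc (x * y) σ hσ) : HopfQ N)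
          = QuotientGroup.mk (elt hc y σ hσ) * QuotientGroup.mk (elt hc x σ hσ) := by
        rw [← QuotientGroup.mk_mul, QuotientGroup.eq, Subgroup.mem_subgroupOf]
        show ⁅x * y, σ⁆⁻¹ * (⁅y, σ⁆ * ⁅x, σ⁆) ∈ ⁅(⊤ : Subgroup F), N⁆
        have hid : ⁅x * y, σ⁆⁻¹ * (⁅y, σ⁆ * ⁅x, σ⁆)
            = ⁅x, σ⁆⁻¹ * ⁅x, ⁅y, σ⁆⁻¹⁆ * ⁅x, σ⁆ := by
          simp only [commutatorElement_def]; group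
        rw [hid]
        have hcmem : ⁅x, ⁅y, σ⁆⁻¹⁆ ∈ ⁅(⊤ : Subgroup F), N⁆ :=
          commutator_mem_commutator (mem_top x) (inv_mem hb)
        have := (Subgroup.commutator_normal (⊤ : Subgroup F) N).conj_mem _ hcmem ⁅x, σ⁆⁻¹
        rwa [inv_inv] at this
      exact hA.trans (mk_elt_comm hc y x hσ))

theorem fmap_apply (x : F) : fmap hc hσ x = QuotientGroup.mk (elt hc x σ hσ) := rfl

theorem fmap_eq_gmap (x : F) : fmap hc hσ x = gmap hc x ⟨σ, hσ⟩ := rfl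

theorem gmap_mem_range (x : F) (s : ↥N') (hσgen : N' = N ⊔ Subgroup.zpowers σ) :
    gmap hc x s ∈ (fmap hc hσ).range := by
  obtain ⟨s, hs⟩ := s
  have hs' : s ∈ ((Subgroup.zpowers σ ⊔ N : Subgroup F) : Set F) := by
    rw [← sup_comm, ← hσgen]; exact hs
  rw [Subgroup.mul_normal] at hs'
  obtain ⟨a, ha, ν, hν, rfl⟩ := hs'
  obtain ⟨t, rfl⟩ := Subgroup.mem_zpowers_iff.mp ha
  have hνN' : ν ∈ N' := by rw [hσgen]; exact Subgroup.mem_sup_left (show ν ∈ N from hν)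
  have h1 : (⟨σ ^ t * ν, hs⟩ : ↥N') = (⟨σ, hσ⟩ : ↥N') ^ t * ⟨ν, hνN'⟩ := by
    apply Subtype.ext
    simp [SubgroupClass.coe_zpow]
  rw [h1, map_mul, map_zpow]
  have h2 : gmap hc x (⟨ν, hνN'⟩ : ↥N') = 1 := by
    show (QuotientGroup.mk (elt hc x ν hνN') : HopfQ N) = 1
    rw [QuotientGroup.eq_one_iff, Subgroup.mem_subgroupOf]
    exact commutator_mem_commutator (mem_top x) (show ν ∈ N from hν)
  rw [h2, mul_one, ← fmap_eq_gmap hc hσ]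
  exact zpow_mem (MonoidHom.mem_range.mpr ⟨x, rfl⟩) t

end maps

end Hopf

section peelsec

variable {F : Type*} [Group F] {N N' : Subgroup F} [N.Normal] [N'.Normal] {σ : F}

theorem ker_le_range (hc : ⁅(⊤ : Subgroup F), N'⁆ ≤ N) (hσ : σ ∈ N')
    (hσgen : N' = N ⊔ Subgroup.zpowers σ)
    {v : F} (hv : v ∈ ⁅(⊤ : Subgroup F), N'⁆) (h : v ∈ N ⊓ commutator F) :
    (QuotientGroup.mk ⟨v, h⟩ : HopfQ N) ∈ (fmap hc hσ).range := by
  have hW'le : ⁅(⊤ : Subgroup F), N'⁆ ≤ N ⊓ commutator F :=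
    le_inf hc (commutator_def F ▸ commutator_mono le_top le_top)
  rw [Subgroup.commutator_def] at hv
  induction hv using Subgroup.closure_induction with
  | mem w hw =>
      obtain ⟨g₁, _, g₂, hg₂, rfl⟩ := hw
      have heq : (QuotientGroup.mk ⟨⁅g₁, g₂⁆, h⟩ : HopfQ N)
          = gmap hc g₁ ⟨g₂, hg₂⟩ := rfl
      rw [heq]
      exact gmap_mem_range hc hσ g₁ ⟨g₂, hg₂⟩ hσgen
  | one =>
      have heq : (QuotientGroup.mk ⟨(1 : F), h⟩ : HopfQ N) = 1 := by
        rw [QuotientGroup.eq_one_iff]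
        exact Subgroup.one_mem _
      rw [heq]; exact one_mem _
  | mul x y hx hy ihx ihy =>
      have hx' : x ∈ N ⊓ commutator F := hW'le (Subgroup.commutator_def ⊤ N' ▸ hx)
      have hy' : y ∈ N ⊓ commutator F := hW'le (Subgroup.commutator_def ⊤ N' ▸ hy)
      have heq : (QuotientGroup.mk ⟨x * y, h⟩ : HopfQ N)
          = QuotientGroup.mk ⟨x, hx'⟩ * QuotientGroup.mk ⟨y, hy'⟩ := rfl
      rw [heq]
      exact mul_mem (ihx hx') (ihy hy')
  | inv x hx ihx =>
      have hx' : x ∈ N ⊓ commutator F := hW'le (Subgroup.commutator_def ⊤ N' ▸ hx)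
      have heq : (QuotientGroup.mk ⟨x⁻¹, h⟩ : HopfQ N)
          = (QuotientGroup.mk ⟨x, hx'⟩)⁻¹ := rfl
      rw [heq]
      exact inv_mem (ihx hx')

end peelsec

section peelmain

variable {F : Type*} [Group F] {N N' : Subgroup F} [N.Normal] [N'.Normal] {σ : F}

theorem peel (hle : N ≤ N') (hσgen : N' = N ⊔ Subgroup.zpowers σ)
    (hc : ⁅(⊤ : Subgroup F), N'⁆ ≤ N) [Finite (F ⧸ N')] [Finite (HopfQ N')] :
    Finite (HopfQ N) ∧ Nat.card (HopfQ N) ≤ Nat.card (F ⧸ N') * Nat.card (HopfQ N') := by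
  have hσ : σ ∈ N' := by rw [hσgen]; exact Subgroup.mem_sup_right (Subgroup.mem_zpowers σ)
  set f := fmap (N := N) hc hσ with hf
  have hincl : N ⊓ commutator F ≤ N' ⊓ commutator F := inf_le_inf hle le_rfl
  have hWW' : ⁅(⊤ : Subgroup F), N⁆ ≤ ⁅(⊤ : Subgroup F), N'⁆ :=
    Subgroup.commutator_mono le_rfl hle
  have hmapcond : (⁅(⊤ : Subgroup F), N⁆.subgroupOf (N ⊓ commutator F)) ≤
      (⁅(⊤ : Subgroup F), N'⁆.subgroupOf (N' ⊓ commutator F)).comap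
        (Subgroup.inclusion hincl) := by
    intro x hx
    rw [Subgroup.mem_subgroupOf] at hx
    rw [Subgroup.mem_comap, Subgroup.mem_subgroupOf, Subgroup.coe_inclusion]
    exact hWW' hx
  set φ : HopfQ N →* HopfQ N' := QuotientGroup.map _ _ (Subgroup.inclusion hincl) hmapcond
    with hφ
  -- `f` kills `N'`
  have hker0 : N' ≤ f.ker := by
    rw [hσgen]
    refine sup_le ?_ ?_
    · intro ν hν
      rw [MonoidHom.mem_ker]
      show (QuotientGroup.mk (elt hc ν σ hσ) : HopfQ N) = 1
      rw [QuotientGroup.eq_one_iff, Subgroup.mem_subgroupOf]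
      have : ⁅ν, σ⁆ ∈ ⁅N, (⊤ : Subgroup F)⁆ := commutator_mem_commutator hν (mem_top σ)
      rwa [Subgroup.commutator_comm] at this
    · rw [Subgroup.zpowers_le, MonoidHom.mem_ker]
      show (QuotientGroup.mk (elt hc σ σ hσ) : HopfQ N) = 1
      rw [QuotientGroup.eq_one_iff, Subgroup.mem_subgroupOf]
      show ⁅σ, σ⁆ ∈ ⁅(⊤ : Subgroup F), N⁆
      rw [commutatorElement_self]; exact one_mem _
  set f' : F ⧸ N' →* HopfQ N :=
    QuotientGroup.lift N' f (fun x hx => MonoidHom.mem_ker.mp (hker0 hx)) with hf'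
  haveI hfinrange : Finite ↥f'.range :=
    Finite.of_surjective f'.rangeRestrict f'.rangeRestrict_surjective
  have hfr : f.range ≤ f'.range := by
    rintro y ⟨x, rfl⟩
    exact ⟨QuotientGroup.mk x, rfl⟩
  have hkerle : φ.ker ≤ f.range := by
    intro q hq
    obtain ⟨⟨v, h⟩, rfl⟩ := QuotientGroup.mk_surjective q
    rw [MonoidHom.mem_ker, hφ, QuotientGroup.map_mk, QuotientGroup.eq_one_iff,
      Subgroup.mem_subgroupOf, Subgroup.coe_inclusion] at hq
    exact ker_le_range hc hσ hσgen hq h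
  haveI hfinker : Finite ↥φ.ker :=
    Finite.of_injective (Subgroup.inclusion (hkerle.trans hfr)) (Subgroup.inclusion_injective _)
  haveI hfinφrange : Finite ↥φ.range := inferInstance
  haveI hfinquot : Finite (HopfQ N ⧸ φ.ker) :=
    Finite.of_equiv _ (QuotientGroup.quotientKerEquivRange φ).toEquiv.symm
  haveI hfinH : Finite (HopfQ N) :=
    Finite.of_equiv _ (Subgroup.groupEquivQuotientProdSubgroup (s := φ.ker)).symm
  refine ⟨hfinH, ?_⟩
  have c1 : Nat.card (HopfQ N) = Nat.card (HopfQ N ⧸ φ.ker) * Nat.card φ.ker :=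
    Subgroup.card_eq_card_quotient_mul_card_subgroup _
  have e1 : Nat.card (HopfQ N ⧸ φ.ker) = Nat.card φ.range :=
    Nat.card_congr (QuotientGroup.quotientKerEquivRange φ).toEquiv
  have b1 : Nat.card φ.range ≤ Nat.card (HopfQ N') :=
    Nat.card_le_card_of_injective _ Subtype.val_injective
  have b2 : Nat.card φ.ker ≤ Nat.card ↥f'.range :=
    Subgroup.card_le_of_le (hkerle.trans hfr)
  have b3 : Nat.card ↥f'.range ≤ Nat.card (F ⧸ N') :=
    Nat.card_le_card_of_surjective f'.rangeRestrict f'.rangeRestrict_surjective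
  calc Nat.card (HopfQ N) = Nat.card φ.range * Nat.card φ.ker := by rw [c1, e1]
    _ ≤ Nat.card (HopfQ N') * Nat.card (F ⧸ N') :=
        Nat.mul_le_mul b1 (b2.trans b3)
    _ = Nat.card (F ⧸ N') * Nat.card (HopfQ N') := Nat.mul_comm _ _

end peelmain

section green
set_option maxHeartbeats 1000000 in

theorem green (p : ℕ) (hp : p.Prime) : ∀ (m : ℕ) (F : Type*) (_ : Group F)
    (N : Subgroup F) (_ : N.Normal), Nat.card (F ⧸ N) = p ^ m →
    Finite (HopfQ N) ∧ Nat.card (HopfQ N) ≤ p ^ (m * (m - 1) / 2) := by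
  intro m
  induction m with
  | zero =>
      intro F _ N _ hcard
      rw [pow_zero] at hcard
      have hsub : Subsingleton (F ⧸ N) := (Nat.card_eq_one_iff_unique.mp hcard).1
      have hN : N = ⊤ := by
        ext x
        simp only [Subgroup.mem_top, iff_true]
        exact (QuotientGroup.eq_one_iff x).mp (Subsingleton.elim _ _)
      subst hN
      have hsub2 : Subsingleton (HopfQ (⊤ : Subgroup F)) := by
        constructor
        intro a b
        have key : ∀ q : HopfQ (⊤ : Subgroup F), q = 1 := by
          intro q
          obtain ⟨⟨v, hv⟩, rfl⟩ := QuotientGroup.mk_surjective q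
          rw [QuotientGroup.eq_one_iff, Subgroup.mem_subgroupOf]
          exact (commutator_def F) ▸ hv.2
        rw [key a, key b]
      refine ⟨Finite.of_subsingleton, ?_⟩
      have : Nat.card (HopfQ (⊤ : Subgroup F)) = 1 :=
        Nat.card_eq_one_iff_unique.mpr ⟨hsub2, ⟨1⟩⟩
      simp [this]
  | succ m ih =>
      intro F _ N _ hcard
      haveI : Fact p.Prime := ⟨hp⟩
      haveI hfinQ : Finite (F ⧸ N) := by
        refine (Nat.card_pos_iff.mp ?_).2
        rw [hcard]; exact pow_pos hp.pos _
      have hpQ : IsPGroup p (F ⧸ N) := IsPGroup.of_card hcard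
      haveI : Nontrivial (F ⧸ N) := by
        rw [← Finite.one_lt_card_iff_nontrivial, hcard]
        exact Nat.one_lt_pow (Nat.succ_ne_zero m) hp.one_lt
      haveI := hpQ.center_nontrivial
      -- find a central element of order p
      have hdvd : p ∣ Nat.card (Subgroup.center (F ⧸ N)) := by
        obtain ⟨i, hi⟩ := (Nat.dvd_prime_pow hp).mp
          (hcard ▸ Subgroup.card_subgroup_dvd_card (Subgroup.center (F ⧸ N)))
        have : i ≠ 0 := by
          rintro rfl
          rw [pow_zero] at hi
          exact (Finite.one_lt_card_iff_nontrivial.mpr ‹_›).ne' hi.2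
        rw [hi.2]
        exact dvd_pow_self p this
      obtain ⟨z, hz⟩ :=
        exists_prime_orderOf_dvd_card' (G := ↥(Subgroup.center (F ⧸ N))) p hdvd
      set w : F ⧸ N := (z : F ⧸ N) with hw
      have hworder : orderOf w = p := by rw [hw, Subgroup.orderOf_coe, hz]
      have hwcen : w ∈ Subgroup.center (F ⧸ N) := z.2
      have hzle : Subgroup.zpowers w ≤ Subgroup.center (F ⧸ N) :=
        Subgroup.zpowers_le.mpr hwcen
      haveI hZnormal : (Subgroup.zpowers w).Normal := by
        constructor
        intro n hn g
        have hcomm := Subgroup.mem_center_iff.mp (hzle hn) g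
        have : g * n * g⁻¹ = n := by rw [hcomm]; group
        rwa [this]
      set π := QuotientGroup.mk' N with hπ
      set N' : Subgroup F := (Subgroup.zpowers w).comap π with hN'
      haveI : N'.Normal := Subgroup.Normal.comap hZnormal π
      have hle : N ≤ N' := by
        intro x hx
        rw [hN', Subgroup.mem_comap]
        have : π x = 1 := (QuotientGroup.eq_one_iff x).mpr hx
        rw [this]; exact one_mem _
      obtain ⟨σ, hσπ⟩ := QuotientGroup.mk'_surjective N w
      have hσmem : σ ∈ N' := by
        rw [hN', Subgroup.mem_comap, hσπ]
        exact Subgroup.mem_zpowers w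
      have hσgen : N' = N ⊔ Subgroup.zpowers σ := by
        apply le_antisymm
        · intro x hx
          rw [hN', Subgroup.mem_comap] at hx
          obtain ⟨t, ht⟩ := Subgroup.mem_zpowers_iff.mp hx
          have hmem : x * σ ^ (-t) ∈ N := by
            rw [← QuotientGroup.ker_mk' N, MonoidHom.mem_ker, map_mul, map_zpow, hσπ,
              ← hπ, ← ht]
            group
          have hxeq : x = (x * σ ^ (-t)) * σ ^ t := by group
          rw [hxeq]
          exact mul_mem (Subgroup.mem_sup_left hmem)
            (Subgroup.mem_sup_right (zpow_mem (Subgroup.mem_zpowers σ) t))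
        · exact sup_le hle (Subgroup.zpowers_le.mpr hσmem)
      have hc : ⁅(⊤ : Subgroup F), N'⁆ ≤ N := by
        rw [Subgroup.commutator_le]
        intro g _ s hs
        rw [← QuotientGroup.ker_mk' N, MonoidHom.mem_ker, map_commutatorElement,
          commutatorElement_eq_one_iff_mul_comm]
        rw [hN', Subgroup.mem_comap] at hs
        exact Subgroup.mem_center_iff.mp (hzle hs) (π g)
      -- card of F ⧸ N'
      have hidx : Nat.card (F ⧸ N') = p ^ m := by
        have h1 : N'.index = (Subgroup.zpowers w).index :=
          Subgroup.index_comap_of_surjective _ (QuotientGroup.mk'_surjective N)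
        have h2 : (Subgroup.zpowers w).index * Nat.card (Subgroup.zpowers w)
            = Nat.card (F ⧸ N) := Subgroup.index_mul_card _
        rw [Nat.card_zpowers, hworder, hcard] at h2
        have h3 : (Subgroup.zpowers w).index = p ^ m := by
          have : p ^ (m + 1) = p ^ m * p := by ring
          rw [this] at h2
          exact Nat.eq_of_mul_eq_mul_right hp.pos h2
        show N'.index = p ^ m
        rw [h1, h3]
      haveI : Finite (F ⧸ N') := by
        refine (Nat.card_pos_iff.mp ?_).2
        rw [hidx]; exact pow_pos hp.pos _
      clear_value N' π w
      have ih1 := ih F ‹Group F›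
      have ih2 := ih1 N'
      have ih3 := ih2 ‹N'.Normal›
      have ih4 := ih3 hidx
      obtain ⟨hfin', hbound'⟩ := ih4
      obtain ⟨hfin, hbound⟩ := peel hle hσgen hc
      refine ⟨hfin, ?_⟩
      calc Nat.card (HopfQ N) ≤ Nat.card (F ⧸ N') * Nat.card (HopfQ N') := hbound
        _ ≤ p ^ m * p ^ (m * (m - 1) / 2) := by
            exact Nat.mul_le_mul (le_of_eq hidx) hbound'
        _ = p ^ (m + m * (m - 1) / 2) := by rw [pow_add]
        _ = p ^ ((m + 1) * (m + 1 - 1) / 2) := by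
            congr 1
            simp only [Nat.add_sub_cancel]
            rcases m with _ | k
            · rfl
            · simp only [Nat.add_sub_cancel]
              obtain ⟨j, hj⟩ := Nat.even_mul_succ_self k
              have e1 : (k + 1) * k = 2 * j := by rw [Nat.mul_comm, hj, two_mul]
              have e2 : (k + 1 + 1) * (k + 1) = 2 * (j + (k + 1)) := by
                calc (k + 1 + 1) * (k + 1) = (k + 1) * k + 2 * (k + 1) := by ring
                  _ = 2 * j + 2 * (k + 1) := by rw [e1]
                  _ = 2 * (j + (k + 1)) := by ring
              rw [e1, e2, Nat.mul_div_cancel_left _ (by norm_num : 0 < 2),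
                Nat.mul_div_cancel_left _ (by norm_num : 0 < 2)]
              omega

end green

section main

set_option maxHeartbeats 1000000 in
/-- If `G` is a non-abelian `p`-group of order `p^n` (`n ≥ 6`) with `|G'| = p` and corank
`t(G) ≤ n + 1` (i.e. `|M(G)| ≥ p^(n(n-1)/2 - n - 1)`), then `Z(G)` has exponent at most
`p^2`. -/
theorem center_exponent_le_of_large_schurMultiplier (p n : ℕ) (hp : p.Prime) (hn : 6 ≤ n)
    (G : Type*) [Group G] (hG : Nat.card G = p ^ n)
    (hna : ∃ a b : G, a * b ≠ b * a)
    (hG' : Nat.card (commutator G) = p)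
    (hM : p ^ (n * (n - 1) / 2 - n - 1) ≤ Nat.card (schurMultiplier G)) :
    Monoid.exponent ↥(Subgroup.center G) ≤ p ^ 2 := by
  haveI : Fact p.Prime := ⟨hp⟩
  haveI finG : Finite G := (Nat.card_pos_iff.mp (by rw [hG]; exact pow_pos hp.pos _)).2
  have hpG : IsPGroup p G := IsPGroup.of_card hG
  have key : ∀ z : ↥(Subgroup.center G), z ^ p ^ 2 = 1 := by
    intro z
    by_contra hz
    set z₀ : G := (z : G) with hz₀def
    have hz₀ : z₀ ^ p ^ 2 ≠ 1 := by
      intro h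
      exact hz (Subtype.ext (by rw [SubmonoidClass.coe_pow]; exact h))
    obtain ⟨e, he⟩ := (IsPGroup.iff_orderOf.mp hpG) z₀
    have he3 : 3 ≤ e := by
      by_contra h
      push_neg at h
      have hdvd : orderOf z₀ ∣ p ^ 2 := by
        rw [he]; exact pow_dvd_pow p (by omega)
      exact hz₀ (orderOf_dvd_iff_pow_eq_one.mp hdvd)
    -- central element of order exactly p ^ 3
    set w : G := z₀ ^ p ^ (e - 3) with hwdef
    have hworder : orderOf w = p ^ 3 := by
      rw [hwdef, orderOf_pow, he]
      have hgcd : Nat.gcd (p ^ e) (p ^ (e - 3)) = p ^ (e - 3) :=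
        Nat.gcd_eq_right (pow_dvd_pow p (by omega))
      rw [hgcd, Nat.pow_div (by omega) hp.pos]
      congr 1
      omega
    have hwcen : w ∈ Subgroup.center G := pow_mem z.2 _
    -- the free presentation
    set F : Type _ := FreeGroup G with hFdef
    set π : FreeGroup G →* G := FreeGroup.lift (id : G → G) with hπdef
    have hsurj : Function.Surjective π := fun g => ⟨FreeGroup.of g, by simp [hπdef]⟩
    set R : Subgroup (FreeGroup G) := π.ker with hRdef
    have hzle : Subgroup.zpowers w ≤ Subgroup.center G := Subgroup.zpowers_le.mpr hwcen
    haveI hZnormal : (Subgroup.zpowers w).Normal := by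
      constructor
      intro a ha g
      have hcomm := Subgroup.mem_center_iff.mp (hzle ha) g
      have : g * a * g⁻¹ = a := by rw [hcomm]; group
      rwa [this]
    set N' : Subgroup (FreeGroup G) := (Subgroup.zpowers w).comap π with hN'def
    haveI hN'normal : N'.Normal := Subgroup.Normal.comap hZnormal π
    have hle : R ≤ N' := by
      intro x hx
      rw [hN'def, Subgroup.mem_comap]
      rw [hRdef, MonoidHom.mem_ker] at hx
      rw [hx]; exact one_mem _
    set σ : FreeGroup G := FreeGroup.of w with hσdef
    have hσπ : π σ = w := by simp [hπdef, hσdef]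
    have hσmem : σ ∈ N' := by
      rw [hN'def, Subgroup.mem_comap, hσπ]
      exact Subgroup.mem_zpowers w
    have hσgen : N' = R ⊔ Subgroup.zpowers σ := by
      apply le_antisymm
      · intro x hx
        rw [hN'def, Subgroup.mem_comap] at hx
        obtain ⟨t, ht⟩ := Subgroup.mem_zpowers_iff.mp hx
        have hmem : x * σ ^ (-t) ∈ R := by
          rw [hRdef, MonoidHom.mem_ker, map_mul, map_zpow, hσπ, ← ht]
          group
        have hxeq : x = (x * σ ^ (-t)) * σ ^ t := by group
        rw [hxeq]
        exact mul_mem (Subgroup.mem_sup_left hmem)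
          (Subgroup.mem_sup_right (zpow_mem (Subgroup.mem_zpowers σ) t))
      · exact sup_le hle (Subgroup.zpowers_le.mpr hσmem)
    have hc : ⁅(⊤ : Subgroup (FreeGroup G)), N'⁆ ≤ R := by
      rw [Subgroup.commutator_le]
      intro g _ s hs
      rw [hRdef, MonoidHom.mem_ker, map_commutatorElement,
        commutatorElement_eq_one_iff_mul_comm]
      rw [hN'def, Subgroup.mem_comap] at hs
      exact Subgroup.mem_center_iff.mp (hzle hs) (π g)
    -- card of the quotient
    have hidx : Nat.card (FreeGroup G ⧸ N') = p ^ (n - 3) := by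
      have h1 : N'.index = (Subgroup.zpowers w).index :=
        Subgroup.index_comap_of_surjective _ hsurj
      have h2 : (Subgroup.zpowers w).index * Nat.card (Subgroup.zpowers w)
          = Nat.card G := Subgroup.index_mul_card _
      rw [Nat.card_zpowers, hworder, hG] at h2
      have h3 : (Subgroup.zpowers w).index = p ^ (n - 3) := by
        have hsplit : p ^ n = p ^ (n - 3) * p ^ 3 := by
          rw [← pow_add]; congr 1; omega
        rw [hsplit] at h2
        exact Nat.eq_of_mul_eq_mul_right (pow_pos hp.pos 3) h2
      rw [← Subgroup.index_eq_card, h1, h3]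
    haveI : Finite (FreeGroup G ⧸ N') := by
      refine (Nat.card_pos_iff.mp ?_).2
      rw [hidx]; exact pow_pos hp.pos _
    -- Green's bound for N'
    have g1 := green p hp (n - 3) (FreeGroup G) (inferInstance : Group (FreeGroup G))
    have g2 := g1 N' hN'normal
    have g3 := g2 hidx
    obtain ⟨hfin', hbound'⟩ := g3
    haveI := hfin'
    -- peel
    obtain ⟨hfin, hbound⟩ := peel hle hσgen hc
    -- the contradiction
    have hMle : Nat.card (schurMultiplier G)
        ≤ p ^ ((n - 3) + (n - 3) * (n - 4) / 2) := by
      have : Nat.card (schurMultiplier G) = Nat.card (HopfQ R) := rfl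
      rw [this]
      calc Nat.card (HopfQ R)
          ≤ Nat.card (FreeGroup G ⧸ N') * Nat.card (HopfQ N') := hbound
        _ ≤ p ^ (n - 3) * p ^ ((n - 3) * (n - 3 - 1) / 2) :=
            Nat.mul_le_mul (le_of_eq hidx) hbound'
        _ = p ^ ((n - 3) + (n - 3) * (n - 4) / 2) := by
            have hsub : n - 3 - 1 = n - 4 := by omega
            rw [hsub, ← pow_add]
    have harith : (n - 3) + (n - 3) * (n - 4) / 2 < n * (n - 1) / 2 - n - 1 := by
      obtain ⟨m, rfl⟩ : ∃ m, n = m + 6 := ⟨n - 6, by omega⟩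
      have hs3 : m + 6 - 3 = m + 3 := by omega
      have hs4 : m + 6 - 4 = m + 2 := by omega
      have hs1 : m + 6 - 1 = m + 5 := by omega
      rw [hs3, hs4, hs1]
      obtain ⟨j, hj⟩ := Nat.even_mul_succ_self (m + 2)
      obtain ⟨l, hl⟩ := Nat.even_mul_succ_self (m + 5)
      have hj' : (m + 3) * (m + 2) = 2 * j := by
        rw [show (m + 3) * (m + 2) = (m + 2) * (m + 2 + 1) from by ring, hj]; omega
      have hl' : (m + 6) * (m + 5) = 2 * l := by
        rw [show (m + 6) * (m + 5) = (m + 5) * (m + 5 + 1) from by ring, hl]; omega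
      have hd1 : (m + 3) * (m + 2) / 2 = j := by
        rw [hj']; exact Nat.mul_div_cancel_left j (by norm_num)
      have hd2 : (m + 6) * (m + 5) / 2 = l := by
        rw [hl']; exact Nat.mul_div_cancel_left l (by norm_num)
      have hrel : (m + 6) * (m + 5) = (m + 3) * (m + 2) + 6 * m + 24 := by ring
      have h1 : 2 * l = 2 * j + 6 * m + 24 := by rw [← hl', hrel, hj']
      rw [hd1, hd2]
      omega
    have hcontra := lt_of_le_of_lt (hM.trans hMle)
      (Nat.pow_lt_pow_right hp.one_lt harith)
    exact lt_irrefl _ hcontra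
  have hdvd : Monoid.exponent ↥(Subgroup.center G) ∣ p ^ 2 :=
    Monoid.exponent_dvd_of_forall_pow_eq_one key
  exact Nat.le_of_dvd (pow_pos hp.pos 2) hdvd

end main
end
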